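/- Let φ_j be indicator functions of disjoint intervals of width Δx partitioning the torus, φ_j = χ_{[(j-1)Δx - Δx/2, (j-1)Δx + Δx/2]}. Then for shift 2λt = Δx/2, the first row of M(t) with entries ∫ φ_1(x)φ_k(x + 2λt)dx equals (Δx/2)(1,1,0,...,0), and if N is even the resulting circulant matrix M(t) is singular. -/

import Mathlib

open MeasureTheory Set

lemma integ_indicator_aux (a b : ℝ) (ha : -1 < a) (hab : a ≤ b) (hb : b ≤ 1) :
    ∫ x in (-1:ℝ)..1, Set.indicator (Set.Icc a b) (fun _ => (1:ℝ)) x = b - a := by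
  rw [intervalIntegral.integral_of_le (by norm_num),
    MeasureTheory.setIntegral_indicator measurableSet_Icc]
  have hsub : Set.Ioc (-1:ℝ) 1 ∩ Set.Icc a b = Set.Icc a b := by
    apply Set.inter_eq_self_of_subset_right
    intro x hx
    exact ⟨lt_of_lt_of_le ha hx.1, le_trans hx.2 hb⟩
  rw [hsub, MeasureTheory.setIntegral_const, smul_eq_mul, mul_one,
    Measure.real, Real.volume_Icc, ENNReal.toReal_ofReal (by linarith)]

/-- for the periodized indicator basis
`φ_j = χ_{[(j-1)Δx - Δx/2, (j-1)Δx + Δx/2]}` on the torus `[-1,1]` with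
`Δx = 2/N`, the first row of `M(t)` at shift `2λt = Δx/2` equals
`(Δx/2)(1,1,0,…,0)`, and for `N` even the corresponding circulant matrix is
singular. -/
theorem indicator_basis_half_shift_singular (N : ℕ) (hN : 2 ≤ N) [NeZero N]
    (hNeven : Even N) (Δx : ℝ) (hΔx : Δx = 2 / N) (φ₀ : ℝ → ℝ)
    (hφ₀ : ∀ x : ℝ, φ₀ x = Set.indicator {y : ℝ | ∃ m : ℤ, |y - 2 * m| ≤ Δx / 2} (fun _ => 1) x)
    (φ : ℕ → ℝ → ℝ) (hφ : ∀ j x, φ j x = φ₀ (x - ((j : ℝ) - 1) * Δx))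
    (c : ℕ → ℝ)
    (hc : ∀ k, c k = ∫ x in (-1 : ℝ)..1, φ 1 x * φ k (x + Δx / 2))
    (C : Matrix (Fin N) (Fin N) ℝ)
    (hC : ∀ j k : Fin N, C j k = c (((k - j : Fin N) : ℕ) + 1)) :
    c 1 = Δx / 2 ∧ c 2 = Δx / 2 ∧
    (∀ k, 3 ≤ k → k ≤ N → c k = 0) ∧ C.det = 0 := by
  have hN2 : (2:ℝ) ≤ (N:ℝ) := by exact_mod_cast hN
  have hNpos : (0:ℝ) < N := by linarith
  have hΔpos : 0 < Δx := by rw [hΔx]; positivity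
  have hNΔ : (N:ℝ) * Δx = 2 := by
    rw [hΔx]; field_simp
  have hΔle : Δx ≤ 1 := by nlinarith
  -- value of φ₀
  have hone : ∀ y : ℝ, (∃ m : ℤ, |y - 2 * m| ≤ Δx / 2) → φ₀ y = 1 := by
    intro y hy
    rw [hφ₀]
    exact Set.indicator_of_mem hy (fun _ => (1:ℝ))
  have hzero : ∀ y : ℝ, ¬ (∃ m : ℤ, |y - 2 * m| ≤ Δx / 2) → φ₀ y = 0 := by
    intro y hy
    rw [hφ₀]
    exact Set.indicator_of_notMem hy (fun _ => (1:ℝ))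
  have hkey : ∀ y : ℝ, |y| ≤ 1 → ((∃ m : ℤ, |y - 2 * m| ≤ Δx / 2) ↔ |y| ≤ Δx / 2) := by
    intro y hy
    constructor
    · rintro ⟨m, hm⟩
      by_cases hm0 : m = 0
      · simpa [hm0] using hm
      · exfalso
        have habs := abs_le.mp hm
        have habs' := abs_le.mp hy
        rcases lt_or_gt_of_ne hm0 with h | h
        · have hm1 : (m:ℝ) ≤ -1 := by exact_mod_cast (by omega : m ≤ -1)
          linarith [habs.1, habs.2, habs'.1, habs'.2]
        · have hm1 : (1:ℝ) ≤ (m:ℝ) := by exact_mod_cast (by omega : (1:ℤ) ≤ m)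
          linarith [habs.1, habs.2, habs'.1, habs'.2]
    · intro h; exact ⟨0, by simpa using h⟩
  have huIcc : Set.uIcc (-1:ℝ) 1 = Set.Icc (-1:ℝ) 1 := Set.uIcc_of_le (by norm_num)
  -- c 1
  have hc1 : c 1 = Δx / 2 := by
    rw [hc]
    have heq : Set.EqOn (fun x => φ 1 x * φ 1 (x + Δx / 2))
        (Set.indicator (Set.Icc (-(Δx/2)) 0) (fun _ => (1:ℝ))) (Set.uIcc (-1:ℝ) 1) := by
      intro x hx
      rw [huIcc] at hx
      obtain ⟨hx1, hx2⟩ := hx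
      simp only [hφ]
      have h0 : ((1:ℕ):ℝ) - 1 = 0 := by norm_num
      rw [h0, zero_mul, sub_zero, sub_zero]
      by_cases hmem : x ∈ Set.Icc (-(Δx/2)) (0:ℝ)
      · obtain ⟨ha, hb⟩ := id hmem
        rw [Set.indicator_of_mem hmem]
        have e1 : ∃ m : ℤ, |x - 2 * (m:ℝ)| ≤ Δx / 2 := ⟨0, by push_cast; rw [abs_le]; constructor <;> linarith⟩
        have e2 : ∃ m : ℤ, |x + Δx/2 - 2 * (m:ℝ)| ≤ Δx / 2 := ⟨0, by push_cast; rw [abs_le]; constructor <;> linarith⟩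
        rw [hone x e1, hone (x + Δx/2) e2]
        norm_num
      · rw [Set.indicator_of_notMem hmem]
        simp only [Set.mem_Icc, not_and_or, not_le] at hmem
        by_cases hx0 : |x| ≤ Δx / 2
        · -- then x > 0, so second factor is 0
          have hxpos : 0 < x := by
            rcases hmem with h | h
            · exfalso; have := abs_le.mp hx0; linarith
            · exact h
          have : φ₀ (x + Δx/2) = 0 := by
            apply hzero
            rw [hkey _ (by rw [abs_le]; constructor <;> linarith [abs_le.mp hx0])]
            rw [abs_le]; push_neg; intro _; linarith
          rw [this, mul_zero]
        · have : φ₀ x = 0 := by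
            apply hzero
            rw [hkey _ (by rw [abs_le]; constructor <;> linarith)]
            exact hx0
          rw [this, zero_mul]
    rw [intervalIntegral.integral_congr heq,
      integ_indicator_aux _ _ (by linarith) (by linarith) (by norm_num)]
    ring
  -- c 2
  have hc2 : c 2 = Δx / 2 := by
    rw [hc]
    have heq : Set.EqOn (fun x => φ 1 x * φ 2 (x + Δx / 2))
        (Set.indicator (Set.Icc (0:ℝ) (Δx/2)) (fun _ => (1:ℝ))) (Set.uIcc (-1:ℝ) 1) := by
      intro x hx
      rw [huIcc] at hx
      obtain ⟨hx1, hx2⟩ := hx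
      simp only [hφ]
      have h0 : ((1:ℕ):ℝ) - 1 = 0 := by norm_num
      have h1 : ((2:ℕ):ℝ) - 1 = 1 := by norm_num
      rw [h0, h1, zero_mul, sub_zero, one_mul]
      have harg : x + Δx / 2 - Δx = x - Δx/2 := by ring
      rw [harg]
      by_cases hmem : x ∈ Set.Icc (0:ℝ) (Δx/2)
      · obtain ⟨ha, hb⟩ := id hmem
        rw [Set.indicator_of_mem hmem]
        have e1 : ∃ m : ℤ, |x - 2 * (m:ℝ)| ≤ Δx / 2 := ⟨0, by push_cast; rw [abs_le]; constructor <;> linarith⟩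
        have e2 : ∃ m : ℤ, |x - Δx/2 - 2 * (m:ℝ)| ≤ Δx / 2 := ⟨0, by push_cast; rw [abs_le]; constructor <;> linarith⟩
        rw [hone x e1, hone (x - Δx/2) e2]
        norm_num
      · rw [Set.indicator_of_notMem hmem]
        simp only [Set.mem_Icc, not_and_or, not_le] at hmem
        by_cases hx0 : |x| ≤ Δx / 2
        · have hxneg : x < 0 := by
            rcases hmem with h | h
            · exact h
            · exfalso; have := abs_le.mp hx0; linarith
          have : φ₀ (x - Δx/2) = 0 := by
            apply hzero
            rw [hkey _ (by rw [abs_le]; constructor <;> linarith [abs_le.mp hx0])]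
            rw [abs_le]; push_neg; intro h; exfalso; linarith
          rw [this, mul_zero]
        · have : φ₀ x = 0 := by
            apply hzero
            rw [hkey _ (by rw [abs_le]; constructor <;> linarith)]
            exact hx0
          rw [this, zero_mul]
    rw [intervalIntegral.integral_congr heq,
      integ_indicator_aux _ _ (by norm_num) (by linarith) (by linarith)]
    ring
  -- c k = 0
  have hck : ∀ k : ℕ, 3 ≤ k → k ≤ N → c k = 0 := by
    intro k hk3 hkN
    have hk3' : (3:ℝ) ≤ (k:ℝ) := by exact_mod_cast hk3
    have hkN' : (k:ℝ) ≤ (N:ℝ) := by exact_mod_cast hkN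
    rw [hc]
    have heq : Set.EqOn (fun x => φ 1 x * φ k (x + Δx / 2))
        (fun _ => (0:ℝ)) (Set.uIcc (-1:ℝ) 1) := by
      intro x hx
      rw [huIcc] at hx
      obtain ⟨hx1, hx2⟩ := hx
      simp only [hφ]
      have h0 : ((1:ℕ):ℝ) - 1 = 0 := by norm_num
      rw [h0, zero_mul, sub_zero]
      by_cases hx0 : |x| ≤ Δx / 2
      · have hxa := abs_le.mp hx0
        have : φ₀ (x + Δx / 2 - ((k:ℝ) - 1) * Δx) = 0 := by
          apply hzero
          rintro ⟨m, hm⟩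
          have hm' := abs_le.mp hm
          rcases le_or_gt 0 m with h | h
          · have hm0 : (0:ℝ) ≤ (m:ℝ) := by exact_mod_cast h
            nlinarith [hm'.1, hm'.2, hxa.1, hxa.2]
          · have hm1 : (m:ℝ) ≤ -1 := by exact_mod_cast (by omega : m ≤ -1)
            nlinarith [hm'.1, hm'.2, hxa.1, hxa.2, mul_nonneg (by linarith : (0:ℝ) ≤ (N:ℝ) - k) hΔpos.le]
        rw [this, mul_zero]
      · have : φ₀ x = 0 := by
          apply hzero
          rw [hkey _ (by rw [abs_le]; constructor <;> linarith)]
          exact hx0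
        rw [this, zero_mul]
    rw [intervalIntegral.integral_congr heq]
    simp
  refine ⟨hc1, hc2, hck, ?_⟩
  -- determinant
  have h1ltN : 1 < N := by omega
  have hval1 : ((1:Fin N):ℕ) = 1 := by
    rw [Fin.val_one', Nat.mod_eq_of_lt h1ltN]
  have hC' : ∀ j k : Fin N, C j k = if k = j ∨ k = j + 1 then Δx / 2 else 0 := by
    intro j k
    rw [hC]
    by_cases h1 : k = j
    · subst h1
      simp only [sub_self, Fin.val_zero, zero_add, if_pos (Or.inl rfl)]
      exact hc1
    · by_cases h2 : k = j + 1
      · subst h2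
        have : (j + 1 - j : Fin N) = 1 := by abel
        rw [this, hval1, if_pos (Or.inr rfl)]
        exact hc2
      · rw [if_neg (by tauto)]
        have hd : ((k - j : Fin N):ℕ) ≠ 0 := by
          intro h
          apply h1
          have : (k - j : Fin N) = 0 := Fin.ext (by simp [h])
          have := congrArg (· + j) this
          simpa [sub_add_cancel] using this
        have hd1 : ((k - j : Fin N):ℕ) ≠ 1 := by
          intro h
          apply h2
          have : (k - j : Fin N) = 1 := Fin.ext (by rw [h, hval1])
          have := congrArg (· + j) this
          simp only [sub_add_cancel] at this
          rw [this, add_comm]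
        have hlt : ((k - j : Fin N):ℕ) < N := (k - j).isLt
        exact hck _ (by omega) (by omega)
  set v : Fin N → ℝ := fun k => (-1:ℝ)^(k:ℕ) with hv
  have hvne : v ≠ 0 := by
    intro h
    have := congrFun h ⟨0, by omega⟩
    simp [hv] at this
  have hmod : ∀ a : ℕ, ((-1:ℝ))^(a % N) = (-1)^a := by
    intro a
    conv_rhs => rw [← Nat.mod_add_div a N]
    rw [pow_add, pow_mul, hNeven.neg_one_pow, one_pow, mul_one]
  have hjne : ∀ j : Fin N, j ≠ j + 1 := by
    intro j h
    have h01 : (0 : Fin N) = 1 := by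
      have := congrArg (· - j) h
      simpa [sub_self, add_sub_cancel_left] using this.symm
    have := congrArg Fin.val h01
    rw [Fin.val_zero, hval1] at this
    exact absurd this (by omega)
  have hmul : C.mulVec v = 0 := by
    funext j
    show ∑ k, C j k * v k = 0
    have hterm : ∀ k : Fin N, C j k * v k =
        (if k = j then Δx / 2 * v j else 0) + (if k = j + 1 then Δx / 2 * v (j+1) else 0) := by
      intro k
      rw [hC']
      by_cases h1 : k = j
      · subst h1
        rw [if_pos (Or.inl rfl), if_pos rfl, if_neg (hjne k)]
        ring
      · by_cases h2 : k = j + 1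
        · subst h2
          rw [if_pos (Or.inr rfl), if_neg h1, if_pos rfl]
          ring
        · rw [if_neg (by tauto), if_neg h1, if_neg h2]
          ring
    rw [Finset.sum_congr rfl (fun k _ => hterm k), Finset.sum_add_distrib,
      Finset.sum_ite_eq' Finset.univ j (fun _ => Δx / 2 * v j),
      Finset.sum_ite_eq' Finset.univ (j+1) (fun _ => Δx / 2 * v (j+1))]
    simp only [Finset.mem_univ, if_true]
    have hv1 : v (j + 1) = -(v j) := by
      simp only [hv]
      rw [Fin.val_add, hval1, hmod, pow_add]
      ring
    rw [hv1]
    ring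
  exact Matrix.exists_mulVec_eq_zero_iff.mp ⟨v, hvne, hmul⟩
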